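/- Every function f: [n] → {0,1,...,x} lies in exactly one set S(σ) as σ ranges over permutations of [n]: namely S(σ) consists of those f with f(σ(j)) ≥ f(σ(j+1)) when j is a descent of σ and f(σ(j)) > f(σ(j+1)) otherwise, for all 1 ≤ j ≤ n−1. -/

import Mathlib

/-- Number of `r`-descents of a permutation `σ` of `[n]` (positions `i < n` with
`σ(i) ≥ σ(i+1) + r`), encoded on `Fin n`. -/
def rDesc (n r : ℕ) (σ : Equiv.Perm (Fin n)) : ℕ :=
  (Finset.univ.filter fun i : Fin n =>
    (if h : (i : ℕ) + 1 < n then ((σ ⟨(i : ℕ) + 1, h⟩ : Fin n) : ℕ) else n) + r ≤ (σ i : ℕ)).card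

/-- Number of `r`-excedances of a permutation `σ` of `[n]` (positions `i ≤ n` with
`σ(i) ≥ i + r`), encoded on `Fin n`. -/
def rExc (n r : ℕ) (σ : Equiv.Perm (Fin n)) : ℕ :=
  (Finset.univ.filter fun i : Fin n => (i : ℕ) + r ≤ (σ i : ℕ)).card

/-- The last value `σ(n)` of a permutation of `[n]` (as an element of `{1,…,n}`). -/
def lastVal (n : ℕ) (σ : Equiv.Perm (Fin n)) : ℕ :=
  if h : 0 < n then ((σ ⟨n - 1, Nat.sub_lt h Nat.one_pos⟩ : Fin n) : ℕ) + 1 else 0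

/-- `Ar r n m k` = number of permutations of `[n]` with exactly `m` `r`-descents
whose last value is `k`. -/
def Ar (r n m k : ℕ) : ℕ :=
  (Finset.univ.filter fun σ : Equiv.Perm (Fin n) => rDesc n r σ = m ∧ lastVal n σ = k).card

/-- `f ∈ S(σ)`: for every position `j < n`, `f(σ(j)) ≥ f(σ(j+1))` if `j` is a descent of
`σ`, and `f(σ(j)) > f(σ(j+1))` otherwise. -/
def chainCond (n x : ℕ) (σ : Equiv.Perm (Fin n)) (f : Fin n → Fin (x + 1)) : Prop :=
  ∀ j k : Fin n, (j : ℕ) + 1 = (k : ℕ) →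
    if (σ k : ℕ) < (σ j : ℕ) then (f (σ k) : ℕ) ≤ (f (σ j) : ℕ)
    else (f (σ k) : ℕ) < (f (σ j) : ℕ)

instance (n x : ℕ) (σ : Equiv.Perm (Fin n)) (f : Fin n → Fin (x + 1)) :
    Decidable (chainCond n x σ f) := by
  unfold chainCond; infer_instance


private def gkey {n x : ℕ} (f : Fin n → Fin (x + 1)) : Fin n → (Fin (x + 1) ×ₗ Fin n)ᵒᵈ :=
  fun i => OrderDual.toDual (toLex (f i, i))

private lemma gkey_inj {n x : ℕ} (f : Fin n → Fin (x + 1)) :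
    Function.Injective (gkey f) := by
  intro a b h
  simpa [gkey] using congrArg (fun p => (ofLex (OrderDual.ofDual p)).2) h

private lemma pair_iff {n x : ℕ} (f : Fin n → Fin (x + 1)) (a b : Fin n) :
    (if (b : ℕ) < (a : ℕ) then (f b : ℕ) ≤ (f a : ℕ) else (f b : ℕ) < (f a : ℕ)) ↔
      gkey f a < gkey f b := by
  show _ ↔ OrderDual.toDual (toLex (f a, a)) < OrderDual.toDual (toLex (f b, b))
  rw [OrderDual.toDual_lt_toDual, Prod.Lex.lt_iff]
  simp only [ofLex_toLex, Fin.lt_def, Fin.le_def, Fin.ext_iff]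
  split_ifs with h <;> constructor <;> intro h2 <;> omega

private lemma chainCond_iff {n x : ℕ} (f : Fin n → Fin (x + 1)) (σ : Equiv.Perm (Fin n)) :
    chainCond n x σ f ↔ StrictMono (gkey f ∘ σ) := by
  cases n with
  | zero => exact iff_of_true (fun j _ _ => j.elim0) (fun a => a.elim0)
  | succ m =>
    rw [Fin.strictMono_iff_lt_succ]
    constructor
    · intro h i
      have := h (Fin.castSucc i) i.succ (by simp)
      exact (pair_iff f (σ (Fin.castSucc i)) (σ i.succ)).1 this
    · intro h j k hjk
      have hj : (j : ℕ) < m := by have := k.isLt; omega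
      have hcs : Fin.castSucc ⟨(j : ℕ), hj⟩ = j := by ext; simp
      have hsu : Fin.succ ⟨(j : ℕ), hj⟩ = k := by ext; simp [← hjk]
      have := h ⟨(j : ℕ), hj⟩
      rw [hcs, hsu] at this
      exact (pair_iff f (σ j) (σ k)).2 this

/-- Every function `f : [n] → {0,…,x}` lies in exactly one set `S(σ)` as `σ` ranges over
permutations of `[n]`. -/
theorem stmt14 (n x : ℕ) (f : Fin n → Fin (x + 1)) :
    ∃! σ : Equiv.Perm (Fin n), chainCond n x σ f := by
  have key : ∀ σ : Equiv.Perm (Fin n), chainCond n x σ f ↔ StrictMono (gkey f ∘ σ) :=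
    chainCond_iff f
  haveI : WellFoundedLT (Fin n) := Finite.to_wellFoundedLT
  refine ⟨Tuple.sort (gkey f), ?_, ?_⟩
  · show chainCond n x (Tuple.sort (gkey f)) f
    rw [key]
    exact (Tuple.monotone_sort (gkey f)).strictMono_of_injective
      ((gkey_inj f).comp (Tuple.sort (gkey f)).injective)
  · intro τ hτ
    have h1 : StrictMono (gkey f ∘ τ) := (key τ).1 hτ
    have h2 : StrictMono (gkey f ∘ Tuple.sort (gkey f)) :=
      (Tuple.monotone_sort (gkey f)).strictMono_of_injective
        ((gkey_inj f).comp (Tuple.sort (gkey f)).injective)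
    have hr : Set.range (gkey f ∘ τ) = Set.range (gkey f ∘ Tuple.sort (gkey f)) := by
      rw [Set.range_comp, Set.range_comp, τ.surjective.range_eq,
        (Tuple.sort (gkey f)).surjective.range_eq]
    have heq := (h1.range_inj h2).1 hr
    exact Equiv.ext fun i => gkey_inj f (congrFun heq i)
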